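/- If G is a finite simple connected triangle-free graph (ω(G) = 2) with n(G) ≥ 3, then dim_l(G) ≤ (2/5)·n(G). -/

import Mathlib

open SimpleGraph

variable {V : Type*} [Fintype V] [DecidableEq V]

/-- `S` is a local resolving set of `G`. -/
def IsLocalResolving (G : SimpleGraph V) (S : Finset V) : Prop :=
  ∀ u v : V, G.Adj u v → u ∉ S → v ∉ S → ∃ w ∈ S, G.dist u w ≠ G.dist v w

/-- The local metric dimension of `G`. -/
noncomputable def dimL (G : SimpleGraph V) : ℕ :=
  sInf {k | ∃ S : Finset V, S.card = k ∧ IsLocalResolving G S}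

/-- `S` is a local adjacency resolving set of `G`. -/
def IsLocalAdjResolving (G : SimpleGraph V) (S : Finset V) : Prop :=
  ∀ u v : V, G.Adj u v → u ∉ S → v ∉ S → ∃ w ∈ S, Xor' (G.Adj w u) (G.Adj w v)

/-- The local adjacency metric dimension of `G`. -/
noncomputable def dimAL (G : SimpleGraph V) : ℕ :=
  sInf {k | ∃ S : Finset V, S.card = k ∧ IsLocalAdjResolving G S}

/-- `S` is a resolving set of `G`. -/
def IsResolving (G : SimpleGraph V) (S : Finset V) : Prop :=
  ∀ u v : V, u ≠ v → u ∉ S → v ∉ S → ∃ w ∈ S, G.dist u w ≠ G.dist v w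

/-- The metric dimension of `G`. -/
noncomputable def dimM (G : SimpleGraph V) : ℕ :=
  sInf {k | ∃ S : Finset V, S.card = k ∧ IsResolving G S}

/-- `S` is an adjacency resolving set of `G`. -/
def IsAdjResolving (G : SimpleGraph V) (S : Finset V) : Prop :=
  ∀ u v : V, u ≠ v → u ∉ S → v ∉ S → ∃ w ∈ S, Xor' (G.Adj w u) (G.Adj w v)

/-- The adjacency metric dimension of `G`. -/
noncomputable def dimA (G : SimpleGraph V) : ℕ :=
  sInf {k | ∃ S : Finset V, S.card = k ∧ IsAdjResolving G S}

namespace LocalDimAux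
set_option linter.unusedSectionVars false

attribute [local instance] Classical.propDecidable

variable {V : Type*} [Fintype V] [DecidableEq V]

/-- one adjacency step staying inside `s` -/
def SRel (G : SimpleGraph V) (s : Finset V) (a b : V) : Prop := b ∈ s ∧ G.Adj a b

/-- reachability within `s` -/
def SReach (G : SimpleGraph V) (s : Finset V) (a b : V) : Prop :=
  Relation.ReflTransGen (SRel G s) a b

/-- A normal (DFS-like) rooted spanning tree structure on the finset `s`:
every `G`-edge inside `s` joins an ancestor/descendant pair. -/
structure NTree (G : SimpleGraph V) (s : Finset V) (r : V) where
  par : V → V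
  dep : V → ℕ
  par_root : par r = r
  dep_root : dep r = 0
  par_mem : ∀ x ∈ s, par x ∈ s
  par_adj : ∀ x ∈ s, x ≠ r → G.Adj (par x) x
  dep_par : ∀ x ∈ s, x ≠ r → dep x = dep (par x) + 1
  normal : ∀ a ∈ s, ∀ b ∈ s, G.Adj a b →
      (∃ k, par^[k] b = a) ∨ (∃ k, par^[k] a = b)

namespace NTree

variable {G : SimpleGraph V} {s : Finset V} {r : V} (t : NTree G s r)

lemma dep_eq_zero {x : V} (hx : x ∈ s) (h : t.dep x = 0) : x = r := by
  by_contra hne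
  have := t.dep_par x hx hne
  omega

lemma root_iterate (k : ℕ) : t.par^[k] r = r := by
  induction k with
  | zero => rfl
  | succ n ih => rw [Function.iterate_succ_apply, t.par_root, ih]

lemma iterate_mem {x : V} (hx : x ∈ s) (k : ℕ) : t.par^[k] x ∈ s := by
  induction k generalizing x with
  | zero => exact hx
  | succ n ih => rw [Function.iterate_succ_apply]; exact ih (t.par_mem x hx)

lemma dep_iterate {x : V} (hx : x ∈ s) {k : ℕ} (hk : k ≤ t.dep x) :
    t.dep (t.par^[k] x) = t.dep x - k := by
  induction k generalizing x with
  | zero => simp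
  | succ n ih =>
    have hxr : x ≠ r := by
      intro h; subst h; rw [t.dep_root] at hk; omega
    have hdp := t.dep_par x hx hxr
    rw [Function.iterate_succ_apply]
    have h1 : n ≤ t.dep (t.par x) := by omega
    rw [ih (t.par_mem x hx) h1]
    omega

lemma iterate_eq_root {x : V} (hx : x ∈ s) {k : ℕ} (hk : t.dep x ≤ k) :
    t.par^[k] x = r := by
  have h1 : t.par^[t.dep x] x = r := by
    apply t.dep_eq_zero (t.iterate_mem hx _)
    rw [t.dep_iterate hx le_rfl]; omega
  have h2 : k = (k - t.dep x) + t.dep x := by omega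
  rw [h2, Function.iterate_add_apply, h1, t.root_iterate]

end NTree

/-- reach set of a filter is internally reachable -/
lemma sreach_filter {G : SimpleGraph V} {s : Finset V} {y : V} {x : V}
    (h : SReach G s y x) :
    SReach G (s.filter (fun z => SReach G s y z)) y x := by
  induction h with
  | refl => exact Relation.ReflTransGen.refl
  | @tail b c hyb hbc ih =>
    exact ih.tail ⟨Finset.mem_filter.2 ⟨hbc.1, hyb.tail hbc⟩, hbc.2⟩

theorem exists_ntree (G : SimpleGraph V) :
    ∀ (s : Finset V), ∀ r ∈ s, (∀ y ∈ s, SReach G s r y) → Nonempty (NTree G s r) := by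
  intro s
  induction s using Finset.strongInduction with
  | _ s ih =>
    intro r hr hconn
    by_cases hsing : ∀ z ∈ s, z = r
    · exact ⟨{
        par := id
        dep := fun _ => 0
        par_root := rfl
        dep_root := rfl
        par_mem := fun x hx => hx
        par_adj := fun x hx hne => absurd (hsing x hx) hne
        dep_par := fun x hx hne => absurd (hsing x hx) hne
        normal := fun a ha b hb hab => by
          rw [hsing a ha, hsing b hb] at hab; exact absurd hab G.irrefl }⟩
    · push_neg at hsing
      obtain ⟨z, hz, hzr⟩ := hsing
      obtain ⟨y, hy⟩ : ∃ y, SRel G s r y := by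
        rcases (Relation.ReflTransGen.cases_head (hconn z hz)) with h | ⟨y, h1, _⟩
        · exact absurd h.symm hzr
        · exact ⟨y, h1⟩
      have hys : y ∈ s := hy.1
      have hadjry : G.Adj r y := hy.2
      have hyr : y ≠ r := fun h => by rw [h] at hadjry; exact G.irrefl hadjry
      set s' := s.erase r with hs'
      have hys' : y ∈ s' := Finset.mem_erase.2 ⟨hyr, hys⟩
      set C := s'.filter (fun x => SReach G s' y x) with hCdef
      have hCs' : C ⊆ s' := Finset.filter_subset _ _
      have hCs : C ⊆ s := hCs'.trans (Finset.erase_subset _ _)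
      have hrC : r ∉ C := fun h => (Finset.mem_erase.1 (hCs' h)).1 rfl
      have hyC : y ∈ C := Finset.mem_filter.2 ⟨hys', Relation.ReflTransGen.refl⟩
      have hclose : ∀ a ∈ C, ∀ b ∈ s', G.Adj a b → b ∈ C := by
        intro a ha b hb hab
        exact Finset.mem_filter.2 ⟨hb, (Finset.mem_filter.1 ha).2.tail ⟨hb, hab⟩⟩
      have hCconn : ∀ x ∈ C, SReach G C y x := by
        intro x hx
        exact sreach_filter (Finset.mem_filter.1 hx).2
      obtain ⟨T₁⟩ := ih C (Finset.ssubset_iff_of_subset hCs |>.2 ⟨r, hr, hrC⟩) y hyC hCconn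
      set s₂ := s \ C with hs₂def
      have hrs₂ : r ∈ s₂ := Finset.mem_sdiff.2 ⟨hr, hrC⟩
      have hs₂conn : ∀ x ∈ s₂, SReach G s₂ r x := by
        intro x hx
        have hxC := (Finset.mem_sdiff.1 hx).2
        have key : ∀ x, SReach G s r x → x ∉ C → SReach G s₂ r x := by
          intro x hx
          induction hx with
          | refl => intro _; exact Relation.ReflTransGen.refl
          | @tail b c hrb hbc ihh =>
            intro hcC
            by_cases hbC : b ∈ C
            · have hcr : c = r := by
                by_contra hcr
                exact hcC (hclose b hbC c (Finset.mem_erase.2 ⟨hcr, hbc.1⟩) hbc.2)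
              rw [hcr]; exact Relation.ReflTransGen.refl
            · exact (ihh hbC).tail ⟨Finset.mem_sdiff.2 ⟨hbc.1, hcC⟩, hbc.2⟩
        exact key x (hconn x (Finset.mem_sdiff.1 hx).1) hxC
      obtain ⟨T₂⟩ := ih s₂
        (Finset.ssubset_iff_of_subset (Finset.sdiff_subset) |>.2
          ⟨y, hys, fun h => (Finset.mem_sdiff.1 h).2 hyC⟩) r hrs₂ hs₂conn
      -- glue
      set P : V → V := fun x => if x ∈ C then (if x = y then r else T₁.par x) else T₂.par x
        with hPdef
      set Dp : V → ℕ := fun x => if x ∈ C then T₁.dep x + 1 else T₂.dep x with hDpdef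
      have hPC : ∀ x ∈ C, x ≠ y → P x = T₁.par x := by
        intro x hx hxy; simp only [hPdef, if_pos hx, if_neg hxy]
      have hPy : P y = r := by simp only [hPdef]; simp [hyC]
      have hPnC : ∀ x, x ∉ C → P x = T₂.par x := by
        intro x hx; simp only [hPdef, if_neg hx]
      have L1 : ∀ (k : ℕ) (b : V), b ∈ C → ∀ a, T₁.par^[k] b = a → ∃ m, P^[m] b = a := by
        intro k
        induction k with
        | zero => intro b hb a ha; exact ⟨0, ha⟩
        | succ n ihn =>
          intro b hb a ha
          rw [Function.iterate_succ_apply] at ha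
          by_cases hby : b = y
          · subst hby
            rw [T₁.par_root] at ha
            rw [T₁.root_iterate] at ha
            exact ⟨0, ha⟩
          · obtain ⟨m, hm⟩ := ihn (T₁.par b) (T₁.par_mem b hb) a ha
            refine ⟨m + 1, ?_⟩
            rw [Function.iterate_succ_apply, hPC b hb hby]
            exact hm
      have L2 : ∀ (k : ℕ) (b : V), b ∈ s₂ → ∀ a, T₂.par^[k] b = a → ∃ m, P^[m] b = a := by
        intro k
        induction k with
        | zero => intro b hb a ha; exact ⟨0, ha⟩
        | succ n ihn =>
          intro b hb a ha
          rw [Function.iterate_succ_apply] at ha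
          obtain ⟨m, hm⟩ := ihn (T₂.par b) (T₂.par_mem b hb) a ha
          refine ⟨m + 1, ?_⟩
          rw [Function.iterate_succ_apply, hPnC b (Finset.mem_sdiff.1 hb).2]
          exact hm
      have L3 : ∀ x ∈ C, ∃ m, P^[m] x = r := by
        intro x hx
        obtain ⟨m, hm⟩ := L1 (T₁.dep x) x hx y (T₁.iterate_eq_root hx le_rfl)
        refine ⟨m + 1, ?_⟩
        rw [Function.iterate_succ_apply', hm, hPy]
      have hmem2 : ∀ x ∈ s, x ∉ C → x ∈ s₂ := by
        intro x hx hxC; exact Finset.mem_sdiff.2 ⟨hx, hxC⟩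
      refine ⟨{
        par := P
        dep := Dp
        par_root := ?_
        dep_root := ?_
        par_mem := ?_
        par_adj := ?_
        dep_par := ?_
        normal := ?_ }⟩
      · -- par_root
        rw [hPnC r hrC, T₂.par_root]
      · -- dep_root
        simp only [hDpdef, if_neg hrC, T₂.dep_root]
      · -- par_mem
        intro x hx
        by_cases hxC : x ∈ C
        · by_cases hxy : x = y
          · rw [hxy, hPy]; exact hr
          · rw [hPC x hxC hxy]; exact hCs (T₁.par_mem x hxC)
        · rw [hPnC x hxC]
          exact Finset.sdiff_subset (T₂.par_mem x (hmem2 x hx hxC))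
      · -- par_adj
        intro x hx hxr
        by_cases hxC : x ∈ C
        · by_cases hxy : x = y
          · rw [hxy, hPy]; exact hadjry
          · rw [hPC x hxC hxy]; exact T₁.par_adj x hxC hxy
        · rw [hPnC x hxC]; exact T₂.par_adj x (hmem2 x hx hxC) hxr
      · -- dep_par
        intro x hx hxr
        by_cases hxC : x ∈ C
        · by_cases hxy : x = y
          · subst hxy
            simp only [hDpdef, if_pos hxC, hPy, if_neg hrC, T₁.dep_root, T₂.dep_root]
          · have h1 : T₁.par x ∈ C := T₁.par_mem x hxC
            simp only [hDpdef, if_pos hxC, hPC x hxC hxy, if_pos h1]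
            rw [T₁.dep_par x hxC hxy]
        · have hxs₂ := hmem2 x hx hxC
          have h1 : T₂.par x ∈ s₂ := T₂.par_mem x hxs₂
          have h2 : T₂.par x ∉ C := (Finset.mem_sdiff.1 h1).2
          simp only [hDpdef, if_neg hxC, hPnC x hxC, if_neg h2]
          exact T₂.dep_par x hxs₂ hxr
      · -- normal
        intro a ha b hb hab
        by_cases haC : a ∈ C <;> by_cases hbC : b ∈ C
        · rcases T₁.normal a haC b hbC hab with ⟨k, hk⟩ | ⟨k, hk⟩
          · exact Or.inl (L1 k b hbC a hk)
          · exact Or.inr (L1 k a haC b hk)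
        · -- a ∈ C, b ∉ C : then b = r
          have hbr : b = r := by
            by_contra hbr
            exact hbC (hclose a haC b (Finset.mem_erase.2 ⟨hbr, hb⟩) hab)
          subst hbr
          exact Or.inr (L3 a haC)
        · have har : a = r := by
            by_contra har
            exact haC (hclose b hbC a (Finset.mem_erase.2 ⟨har, ha⟩) hab.symm)
          subst har
          exact Or.inl (L3 b hbC)
        · rcases T₂.normal a (hmem2 a ha haC) b (hmem2 b hb hbC) hab with ⟨k, hk⟩ | ⟨k, hk⟩
          · exact Or.inl (L2 k b (hmem2 b hb hbC) a hk)
          · exact Or.inr (L2 k a (hmem2 a ha haC) b hk)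

/-- `{a,b}` is an isolated edge of the induced graph on `t` -/
def IsIsolE (G : SimpleGraph V) (t : Finset V) (a b : V) : Prop :=
  a ∈ t ∧ b ∈ t ∧ G.Adj a b ∧ ∀ c ∈ t, c ≠ a → c ≠ b → ¬G.Adj c a ∧ ¬G.Adj c b

lemma isIsolE_symm {G : SimpleGraph V} {t : Finset V} {a b : V}
    (h : IsIsolE G t a b) : IsIsolE G t b a :=
  ⟨h.2.1, h.1, h.2.2.1.symm, fun c hc hcb hca =>
    ⟨(h.2.2.2 c hc hca hcb).2, (h.2.2.2 c hc hca hcb).1⟩⟩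

/-- endpoints of isolated edges -/
noncomputable def IEset (G : SimpleGraph V) (t : Finset V) : Finset V :=
  t.filter (fun a => ∃ b, IsIsolE G t a b)

/-- every edge of `s` has an endpoint in the closed neighborhood of `S` -/
def Cov (G : SimpleGraph V) (s S : Finset V) : Prop :=
  ∀ a ∈ s, ∀ b ∈ s, G.Adj a b → ∃ z ∈ S, z = a ∨ z = b ∨ G.Adj z a ∨ G.Adj z b

lemma key_card (G : SimpleGraph V) {s : Finset V} {r : V} (t : NTree G s r)
    {w₀ : V} (hw₀s : w₀ ∈ s) {D : Finset V} (hDs : D ⊆ s) (hw₀D : w₀ ∈ D)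
    (hDsub : ∀ x ∈ D, ∃ k, t.par^[k] x = w₀)
    (hdangle : ∀ x ∈ s, x ∉ D → (∃ k, t.par^[k] x = w₀) →
      (∀ y ∈ s, y ≠ r → t.par y ≠ x) ∧ t.par x ∈ D ∧ t.par (t.par x) = w₀) :
    (IEset G (s \ D)).card ≤ (IEset G s).card + 2 := by
  classical
  set rem := s \ D with hremdef
  set isAnc : V → Prop := fun q => ∃ i, 1 ≤ i ∧ i ≤ t.dep w₀ ∧ t.par^[i] w₀ = q
    with hAncdef
  have hw0anc : ∀ {q}, t.dep w₀ ≠ 0 → t.par^[t.dep w₀] w₀ = q → isAnc q := by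
    intro q h0 hq
    exact ⟨t.dep w₀, by omega, le_rfl, hq⟩
  have F0 : ∀ x ∈ s, ∀ k, t.par^[k] x = w₀ → t.dep w₀ ≤ t.dep x := by
    intro x hx k hk
    by_cases h : k ≤ t.dep x
    · have h2 := t.dep_iterate hx h
      rw [hk] at h2; omega
    · have h2 : t.par^[k] x = r := t.iterate_eq_root hx (by omega)
      rw [hk] at h2
      rw [h2, t.dep_root]; omega
  have FAncMem : ∀ q, isAnc q → q ∈ s := by
    rintro q ⟨i, _, _, hq⟩
    rw [← hq]; exact t.iterate_mem hw₀s i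
  have FAncNotD : ∀ q, isAnc q → q ∉ D := by
    rintro q ⟨i, hi1, hi2, hq⟩ hqD
    have hdq : t.dep q = t.dep w₀ - i := by rw [← hq]; exact t.dep_iterate hw₀s hi2
    obtain ⟨k, hk⟩ := hDsub q hqD
    have := F0 q (by rw [← hq]; exact t.iterate_mem hw₀s i) k hk
    omega
  have FAncRem : ∀ q, isAnc q → q ∈ rem := fun q h =>
    Finset.mem_sdiff.2 ⟨FAncMem q h, FAncNotD q h⟩
  have F2 : ∀ p ∈ rem, ∀ c ∈ D, G.Adj c p → (∃ k, t.par^[k] p = w₀) ∨ isAnc p := by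
    intro p hp c hc hadj
    have hps : p ∈ s := (Finset.mem_sdiff.1 hp).1
    have hpD : p ∉ D := (Finset.mem_sdiff.1 hp).2
    have hcs : c ∈ s := hDs hc
    obtain ⟨m, hm⟩ := hDsub c hc
    have hRoot : p = r → (∃ k, t.par^[k] p = w₀) ∨ isAnc p := by
      intro hpr
      by_cases hw0 : t.dep w₀ = 0
      · exfalso; apply hpD
        have hwr : w₀ = r := t.dep_eq_zero hw₀s hw0
        rw [hpr, ← hwr]; exact hw₀D
      · exact Or.inr (hw0anc hw0 (by rw [t.iterate_eq_root hw₀s le_rfl, hpr]))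
    rcases t.normal c hcs p hps hadj with ⟨k, hk⟩ | ⟨k, hk⟩
    · -- t.par^[k] p = c
      left
      exact ⟨m + k, by rw [Function.iterate_add_apply, hk, hm]⟩
    · -- t.par^[k] c = p
      by_cases hkd : k ≤ t.dep c
      · by_cases hmd : m ≤ t.dep c
        · by_cases hkm : k ≤ m
          · left
            refine ⟨m - k, ?_⟩
            rw [← hk, ← Function.iterate_add_apply]
            have he : m - k + k = m := by omega
            rw [he, hm]
          · have hp_eq : t.par^[k - m] w₀ = p := by
              rw [← hm, ← Function.iterate_add_apply]
              have he : k - m + m = k := by omega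
              rw [he, hk]
            by_cases hik : k - m ≤ t.dep w₀
            · exact Or.inr ⟨k - m, by omega, hik, hp_eq⟩
            · exact hRoot (by rw [← hp_eq]; exact t.iterate_eq_root hw₀s (by omega))
        · have h2 : t.par^[m] c = r := t.iterate_eq_root hcs (by omega)
          have hw0r : w₀ = r := by rw [← hm, h2]
          left
          exact ⟨t.dep p, by rw [t.iterate_eq_root hps le_rfl, hw0r]⟩
      · exact hRoot (by rw [← hk]; exact t.iterate_eq_root hcs (by omega))
  have F3 : ∀ p ∈ rem, (∃ k, t.par^[k] p = w₀) → ∀ b, IsIsolE G rem p b → isAnc b := by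
    intro p hp hsub b hiso
    have hps : p ∈ s := (Finset.mem_sdiff.1 hp).1
    have hpD : p ∉ D := (Finset.mem_sdiff.1 hp).2
    obtain ⟨hleaf, hp1, hp2⟩ := hdangle p hps hpD hsub
    have hbrem : b ∈ rem := hiso.2.1
    have hbs : b ∈ s := (Finset.mem_sdiff.1 hbrem).1
    have hbD : b ∉ D := (Finset.mem_sdiff.1 hbrem).2
    have hadj : G.Adj p b := hiso.2.2.1
    have hpb : p ≠ b := G.ne_of_adj hadj
    rcases t.normal p hps b hbs hadj with ⟨k, hk⟩ | ⟨k, hk⟩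
    · -- t.par^[k] b = p : impossible (p is a leaf)
      exfalso
      rcases k with _ | j
      · simp only [Function.iterate_zero, id] at hk
        exact hpb hk.symm
      · have hyp : t.par (t.par^[j] b) = p := by
          rw [← Function.iterate_succ_apply' t.par j b]; exact hk
        have hyys : t.par^[j] b ∈ s := t.iterate_mem hbs j
        have hyyr : t.par^[j] b ≠ r := by
          intro h
          rw [h, t.par_root] at hyp
          apply hpD
          rw [← hyp] at hp1
          rw [t.par_root] at hp1
          rw [← hyp]; exact hp1
        exact hleaf _ hyys hyyr hyp
    · -- t.par^[k] p = b
      rcases k with _ | _ | k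
      · simp only [Function.iterate_zero, id] at hk
        exact absurd hk hpb
      · exfalso; apply hbD
        rw [Function.iterate_one] at hk
        rw [← hk]; exact hp1
      · have h2 : t.par^[2] p = w₀ := by
          have : t.par^[2] p = t.par (t.par p) := by
            rw [Function.iterate_succ_apply', Function.iterate_one]
          rw [this, hp2]
        have hb_eq : t.par^[k] w₀ = b := by
          rw [← h2, ← Function.iterate_add_apply]
          have he : k + 2 = k + 1 + 1 := by omega
          rw [← he] at hk ⊢
          exact hk
        rcases Nat.eq_zero_or_pos k with hk0 | hkpos
        · exfalso; apply hbD
          rw [hk0] at hb_eq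
          simp only [Function.iterate_zero, id] at hb_eq
          rw [← hb_eq]; exact hw₀D
        · by_cases hik : k ≤ t.dep w₀
          · exact ⟨k, by omega, hik, hb_eq⟩
          · have hbr : b = r := by
              rw [← hb_eq]; exact t.iterate_eq_root hw₀s (by omega)
            by_cases hw0 : t.dep w₀ = 0
            · exfalso; apply hbD
              have hwr : w₀ = r := t.dep_eq_zero hw₀s hw0
              rw [hbr, ← hwr]; exact hw₀D
            · exact hw0anc hw0 (by rw [t.iterate_eq_root hw₀s le_rfl, hbr])
  have F4 : ∀ a b, IsIsolE G rem a b → isAnc a → t.par w₀ = a ∨ t.par w₀ = b := by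
    rintro a b hiso ⟨i, hi1, hi2, hia⟩
    rcases eq_or_lt_of_le hi1 with hi1' | hi2'
    · left
      rw [← hia, ← hi1']
      simp [Function.iterate_one]
    · -- 2 ≤ i
      obtain ⟨j, rfl⟩ : ∃ j, i = j + 1 := ⟨i - 1, by omega⟩
      have hj1 : 1 ≤ j := by omega
      have hq1Anc : isAnc (t.par^[j] w₀) := ⟨j, hj1, by omega, rfl⟩
      have hq1s : t.par^[j] w₀ ∈ s := t.iterate_mem hw₀s _
      have hq1rem : t.par^[j] w₀ ∈ rem := FAncRem _ hq1Anc
      have hdep_q1 : t.dep (t.par^[j] w₀) = t.dep w₀ - j := t.dep_iterate hw₀s (by omega)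
      have hq1r : t.par^[j] w₀ ≠ r := by
        intro h; rw [h, t.dep_root] at hdep_q1; omega
      have hpq1 : t.par (t.par^[j] w₀) = a := by
        rw [← Function.iterate_succ_apply' t.par j w₀]; exact hia
      have hadj_a_q1 : G.Adj a (t.par^[j] w₀) := by
        rw [← hpq1]; exact t.par_adj _ hq1s hq1r
      have hdep_a : t.dep a = t.dep w₀ - (j+1) := by
        rw [← hia]; exact t.dep_iterate hw₀s hi2
      have hq1a : t.par^[j] w₀ ≠ a := by
        intro h; rw [h, hdep_a] at hdep_q1; omega
      have hq1b : t.par^[j] w₀ = b := by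
        by_contra hcon
        exact (hiso.2.2.2 _ hq1rem hq1a hcon).1 hadj_a_q1.symm
      by_cases hi3 : 2 ≤ j
      · exfalso
        obtain ⟨m, rfl⟩ : ∃ m, j = m + 1 := ⟨j - 1, by omega⟩
        have hq2Anc : isAnc (t.par^[m] w₀) := ⟨m, by omega, by omega, rfl⟩
        have hq2s : t.par^[m] w₀ ∈ s := t.iterate_mem hw₀s _
        have hq2rem : t.par^[m] w₀ ∈ rem := FAncRem _ hq2Anc
        have hdep_q2 : t.dep (t.par^[m] w₀) = t.dep w₀ - m := t.dep_iterate hw₀s (by omega)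
        have hq2r : t.par^[m] w₀ ≠ r := by
          intro h; rw [h, t.dep_root] at hdep_q2; omega
        have hpq2 : t.par (t.par^[m] w₀) = t.par^[m+1] w₀ :=
          (Function.iterate_succ_apply' t.par m w₀).symm
        have hadj_q1_q2 : G.Adj (t.par^[m+1] w₀) (t.par^[m] w₀) := by
          rw [← hpq2]; exact t.par_adj _ hq2s hq2r
        have hq2a : t.par^[m] w₀ ≠ a := by
          intro h; rw [h, hdep_a] at hdep_q2; omega
        have hq2b : t.par^[m] w₀ ≠ b := by
          intro h
          rw [h] at hdep_q2
          rw [← hq1b] at hdep_q2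
          rw [hdep_q1] at hdep_q2
          omega
        have hfin := (hiso.2.2.2 _ hq2rem hq2a hq2b).2
        rw [← hq1b] at hfin
        exact hfin hadj_q1_q2.symm
      · -- j = 1
        right
        have he : j = 1 := by omega
        rw [← hq1b, he]
        simp
  -- assembly
  set c1 := t.par w₀ with hc1
  set Q := rem.filter (fun x => IsIsolE G rem c1 x) with hQ
  have hQ1 : Q.card ≤ 1 := by
    rw [Finset.card_le_one]
    intro b1 hb1 b2 hb2
    have h1 := (Finset.mem_filter.1 hb1).2
    have h2 := (Finset.mem_filter.1 hb2).2
    by_contra hne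
    have hb2c1 : b2 ≠ c1 := fun h => G.irrefl (h ▸ h2.2.2.1)
    have := (h1.2.2.2 b2 h2.2.1 hb2c1 (Ne.symm hne)).1
    exact this h2.2.2.1.symm
  have hsubset : IEset G rem ⊆ IEset G s ∪ insert c1 Q := by
    intro a ha
    obtain ⟨harem, b, hb⟩ := Finset.mem_filter.1 ha
    have has : a ∈ s := (Finset.mem_sdiff.1 harem).1
    have hbrem : b ∈ rem := hb.2.1
    have hbs : b ∈ s := (Finset.mem_sdiff.1 hbrem).1
    have hadj : G.Adj a b := hb.2.2.1
    by_cases hIs : IsIsolE G s a b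
    · exact Finset.mem_union_left _ (Finset.mem_filter.2 ⟨has, b, hIs⟩)
    · have hviol : ∃ c ∈ s, c ≠ a ∧ c ≠ b ∧ (G.Adj c a ∨ G.Adj c b) := by
        by_contra hcon
        push_neg at hcon
        exact hIs ⟨has, hbs, hadj, fun c hc hca hcb => hcon c hc hca hcb⟩
      obtain ⟨c, hcs, hca, hcb, hcadj⟩ := hviol
      have hcD : c ∈ D := by
        by_contra hcD
        have hcrem : c ∈ rem := Finset.mem_sdiff.2 ⟨hcs, hcD⟩
        have h3 := hb.2.2.2 c hcrem hca hcb
        rcases hcadj with h | h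
        · exact h3.1 h
        · exact h3.2 h
      have hc1ab : c1 = a ∨ c1 = b := by
        rcases hcadj with h | h
        · rcases F2 a harem c hcD h with hsub | hanc
          · have hancb := F3 a harem hsub b hb
            rcases F4 b a (isIsolE_symm hb) hancb with h1 | h1
            · exact Or.inr h1
            · exact Or.inl h1
          · exact F4 a b hb hanc
        · rcases F2 b hbrem c hcD h with hsub | hanc
          · have hanca := F3 b hbrem hsub a (isIsolE_symm hb)
            exact F4 a b hb hanca
          · rcases F4 b a (isIsolE_symm hb) hanc with h1 | h1
            · exact Or.inr h1
            · exact Or.inl h1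
      rcases hc1ab with h1 | h1
      · exact Finset.mem_union_right _ (Finset.mem_insert.2 (Or.inl h1.symm))
      · have h2 : IsIsolE G rem c1 a := by rw [h1]; exact isIsolE_symm hb
        exact Finset.mem_union_right _
          (Finset.mem_insert.2 (Or.inr (Finset.mem_filter.2 ⟨harem, h2⟩)))
  calc (IEset G rem).card ≤ (IEset G s ∪ insert c1 Q).card := Finset.card_le_card hsubset
    _ ≤ (IEset G s).card + (insert c1 Q).card := Finset.card_union_le _ _
    _ ≤ (IEset G s).card + 2 := by
        have := Finset.card_insert_le c1 Q
        omega

theorem main_cov (G : SimpleGraph V) :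
    ∀ s : Finset V, ∃ S : Finset V, S ⊆ s ∧
      10 * S.card ≤ 4 * s.card + (IEset G s).card ∧ Cov G s S := by
  intro s
  induction s using Finset.strongInduction with
  | _ s ih =>
    rcases Finset.eq_empty_or_nonempty s with rfl | ⟨x₀, hx₀⟩
    · exact ⟨∅, Finset.Subset.refl _, by simp, fun a ha => absurd ha (Finset.notMem_empty a)⟩
    by_cases hconn : ∀ y ∈ s, SReach G s x₀ y
    · -- connected case
      obtain ⟨T⟩ := exists_ntree G s x₀ hx₀ hconn
      by_cases hone : ∀ z ∈ s, z = x₀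
      · refine ⟨∅, by simp, by simp, ?_⟩
        intro a ha b hb hab
        rw [hone a ha, hone b hb] at hab; exact absurd hab G.irrefl
      push_neg at hone
      obtain ⟨v, hvs, hvmax⟩ := Finset.exists_max_image s T.dep ⟨x₀, hx₀⟩
      by_cases hd1 : T.dep v ≤ 1
      · -- depth ≤ 1 : S = {x₀}
        refine ⟨{x₀}, Finset.singleton_subset_iff.2 hx₀, ?_, ?_⟩
        · rcases Nat.lt_or_ge s.card 3 with hlt | hge
          · -- s.card = 2
            obtain ⟨y, hys, hyx⟩ := hone
            have hxy : x₀ ≠ y := Ne.symm hyx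
            have hsub2 : ({x₀, y} : Finset V) ⊆ s := by
              intro z hz
              rcases Finset.mem_insert.1 hz with h | h
              · rw [h]; exact hx₀
              · rw [Finset.mem_singleton.1 h]; exact hys
            have hc2 : ({x₀, y} : Finset V).card = 2 := Finset.card_pair hxy
            have hcard2 : s.card = 2 := by
              have h2 := Finset.card_le_card hsub2
              rw [hc2] at h2; omega
            have hseq : ({x₀, y} : Finset V) = s :=
              Finset.eq_of_subset_of_card_le hsub2 (by omega)
            have hadjxy : G.Adj x₀ y := by
              have hpy : T.par y ∈ s := T.par_mem y hys
              have hady := T.par_adj y hys hyx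
              have hpyne : T.par y ≠ y := G.ne_of_adj hady
              have : T.par y = x₀ := by
                have hpy2 : T.par y ∈ ({x₀, y} : Finset V) := by rw [hseq]; exact hpy
                rcases Finset.mem_insert.1 hpy2 with h | h
                · exact h
                · exact absurd (Finset.mem_singleton.1 h) hpyne
              rw [← this]; exact hady
            have hiso : IsIsolE G s x₀ y := by
              refine ⟨hx₀, hys, hadjxy, ?_⟩
              intro c hc hca hcb
              rw [← hseq] at hc
              rcases Finset.mem_insert.1 hc with h | h
              · exact absurd h hca
              · exact absurd (Finset.mem_singleton.1 h) hcb
            have hIE2 : ({x₀, y} : Finset V) ⊆ IEset G s := by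
              intro z hz
              rcases Finset.mem_insert.1 hz with h | h
              · rw [h]; exact Finset.mem_filter.2 ⟨hx₀, y, hiso⟩
              · rw [Finset.mem_singleton.1 h]
                exact Finset.mem_filter.2 ⟨hys, x₀, isIsolE_symm hiso⟩
            have h2 := Finset.card_le_card hIE2
            rw [hc2] at h2
            simp only [Finset.card_singleton]
            omega
          · simp only [Finset.card_singleton]; omega
        · intro a ha b hb hab
          refine ⟨x₀, Finset.mem_singleton_self x₀, ?_⟩
          by_cases hax : a = x₀
          · exact Or.inl hax.symm
          · have hda : T.dep a ≤ 1 := le_trans (hvmax a ha) hd1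
            have hda1 : T.dep a = 1 := by
              rcases Nat.eq_zero_or_pos (T.dep a) with h | h
              · exact absurd (T.dep_eq_zero ha h) hax
              · omega
            have hpa : T.dep (T.par a) = 0 := by
              have := T.dep_par a ha hax; omega
            have hpax : T.par a = x₀ := T.dep_eq_zero (T.par_mem a ha) hpa
            refine Or.inr (Or.inr (Or.inl ?_))
            rw [← hpax]; exact T.par_adj a ha hax
      · -- main case : depth ≥ 2
        push_neg at hd1
        have hd2 : 2 ≤ T.dep v := hd1
        set u := T.par v with hu
        set w := T.par u with hw
        have hvr : v ≠ x₀ := fun h => by rw [h, T.dep_root] at hd2; omega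
        have hus : u ∈ s := T.par_mem v hvs
        have hdepu : T.dep u = T.dep v - 1 := by
          have h := T.dep_par v hvs hvr
          rw [← hu] at h
          omega
        have hur : u ≠ x₀ := fun h => by rw [h, T.dep_root] at hdepu; omega
        have hws : w ∈ s := T.par_mem u hus
        have hdepw : T.dep w = T.dep v - 2 := by
          have h := T.dep_par u hus hur
          rw [← hw] at h
          omega
        set chu := s.filter (fun x => x ≠ x₀ ∧ T.par x = u) with hchu
        set chw := s.filter (fun x => x ≠ x₀ ∧ T.par x = w) with hchw
        have hvchu : v ∈ chu := Finset.mem_filter.2 ⟨hvs, hvr, rfl⟩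
        have huchw : u ∈ chw := Finset.mem_filter.2 ⟨hus, hur, rfl⟩
        -- generic step
        have step : ∀ (chosen w₀ : V) (D : Finset V), D ⊆ s → w₀ ∈ D → chosen ∈ s →
            (∀ x ∈ D, x = chosen ∨ G.Adj chosen x) → 3 ≤ D.card →
            (∀ x ∈ D, ∃ k, T.par^[k] x = w₀) →
            (∀ x ∈ s, x ∉ D → (∃ k, T.par^[k] x = w₀) →
              (∀ y ∈ s, y ≠ x₀ → T.par y ≠ x) ∧ T.par x ∈ D ∧ T.par (T.par x) = w₀) →
            ∃ S : Finset V, S ⊆ s ∧ 10 * S.card ≤ 4 * s.card + (IEset G s).card ∧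
              Cov G s S := by
          intro chosen w₀ D hDs hw₀D hchosen hcov hD3 hDsub hdangle
          have hw₀s : w₀ ∈ s := hDs hw₀D
          have hssub : s \ D ⊂ s :=
            (Finset.ssubset_iff_of_subset Finset.sdiff_subset).2
              ⟨w₀, hw₀s, fun h => (Finset.mem_sdiff.1 h).2 hw₀D⟩
          obtain ⟨S', hS'sub, hS'card, hS'cov⟩ := ih (s \ D) hssub
          have hkey := key_card G T hw₀s hDs hw₀D hDsub hdangle
          refine ⟨insert chosen S', ?_, ?_, ?_⟩
          · exact Finset.insert_subset hchosen (hS'sub.trans Finset.sdiff_subset)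
          · have h1 : (insert chosen S').card ≤ S'.card + 1 := Finset.card_insert_le _ _
            have h2 : (s \ D).card = s.card - D.card := Finset.card_sdiff_of_subset hDs
            have h3 : D.card ≤ s.card := Finset.card_le_card hDs
            omega
          · intro a ha b hb hab
            by_cases haD : a ∈ D
            · refine ⟨chosen, Finset.mem_insert_self _ _, ?_⟩
              rcases hcov a haD with h | h
              · exact Or.inl h.symm
              · exact Or.inr (Or.inr (Or.inl h))
            · by_cases hbD : b ∈ D
              · refine ⟨chosen, Finset.mem_insert_self _ _, ?_⟩
                rcases hcov b hbD with h | h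
                · exact Or.inr (Or.inl h.symm)
                · exact Or.inr (Or.inr (Or.inr h))
              · obtain ⟨z, hz, hzz⟩ := hS'cov a (Finset.mem_sdiff.2 ⟨ha, haD⟩)
                  b (Finset.mem_sdiff.2 ⟨hb, hbD⟩) hab
                exact ⟨z, Finset.mem_insert_of_mem hz, hzz⟩
        -- normalization helper : any subtree witness can be bounded by depth
        have hnorm : ∀ x ∈ s, ∀ w₁ ∈ s, (∃ k, T.par^[k] x = w₁) →
            ∃ k2, T.par^[k2] x = w₁ ∧ k2 ≤ T.dep x ∧ T.dep x = T.dep w₁ + k2 := by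
          intro x hxs w₁ hw₁s ⟨k, hk⟩
          have hgood : ∀ k2, T.par^[k2] x = w₁ → k2 ≤ T.dep x →
              ∃ k2, T.par^[k2] x = w₁ ∧ k2 ≤ T.dep x ∧ T.dep x = T.dep w₁ + k2 := by
            intro k2 hk2 hle
            have hdd := T.dep_iterate hxs hle
            rw [hk2] at hdd
            exact ⟨k2, hk2, hle, by omega⟩
          by_cases h : k ≤ T.dep x
          · exact hgood k hk h
          · have hx0 : T.par^[k] x = x₀ := T.iterate_eq_root hxs (by omega)
            have hwx0 : w₁ = x₀ := by rw [← hk, hx0]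
            exact hgood (T.dep x)
              (by rw [T.iterate_eq_root hxs le_rfl, hwx0]) le_rfl
        have hchu_sub : ∀ x ∈ chu, ∃ k, T.par^[k] x = u := by
          intro x hxc
          exact ⟨1, by simpa using (Finset.mem_filter.1 hxc).2.2⟩
        have hchw_sub : ∀ x ∈ chw, ∃ k, T.par^[k] x = w := by
          intro x hxc
          exact ⟨1, by simpa using (Finset.mem_filter.1 hxc).2.2⟩
        -- x at "grandchild" position of w
        have hgrand : ∀ x ∈ s, (∃ k2, T.par^[k2] x = w ∧ k2 ≤ T.dep x ∧
            T.dep x = T.dep w + k2) → ¬(x = w) → x ∉ chw →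
            T.dep x = T.dep v ∧ x ≠ x₀ ∧ T.par x ∈ chw ∧ T.par (T.par x) = w ∧
              (∀ y ∈ s, y ≠ x₀ → T.par y ≠ x) := by
          rintro x hxs ⟨k2, hk2, hk2le, hk2dep⟩ hxw hxchw
          have hxmax := hvmax x hxs
          have hk2b : k2 ≤ 2 := by omega
          rcases Nat.lt_or_ge k2 2 with hk2lt | hk2ge
          · exfalso
            rcases Nat.lt_or_ge k2 1 with h0 | h1
            · have : k2 = 0 := by omega
              rw [this] at hk2
              simp only [Function.iterate_zero, id] at hk2
              exact hxw hk2
            · have : k2 = 1 := by omega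
              rw [this] at hk2
              simp only [Function.iterate_one] at hk2
              have hxx0 : x ≠ x₀ := by
                intro h
                rw [h, T.dep_root] at hk2dep
                omega
              exact hxchw (Finset.mem_filter.2 ⟨hxs, hxx0, hk2⟩)
          · have hk22 : k2 = 2 := by omega
            rw [hk22] at hk2 hk2dep
            have hdx : T.dep x = T.dep v := by omega
            have hxx0 : x ≠ x₀ := by
              intro h; rw [h, T.dep_root] at hdx; omega
            have hp2 : T.par (T.par x) = w := by
              have h2 : T.par^[2] x = T.par (T.par x) := by
                rw [Function.iterate_succ_apply', Function.iterate_one]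
              rw [← h2, hk2]
            have hpx0 : T.par x ≠ x₀ := by
              intro h
              have hdp := T.dep_par x hxs hxx0
              rw [h, T.dep_root] at hdp
              omega
            have hpchw : T.par x ∈ chw :=
              Finset.mem_filter.2 ⟨T.par_mem x hxs, hpx0, hp2⟩
            refine ⟨hdx, hxx0, hpchw, hp2, ?_⟩
            intro y hy hyr hpar
            have hdy := T.dep_par y hy hyr
            have := hvmax y hy
            rw [hpar, hdx] at hdy
            omega
        by_cases hcase1 : ∃ v' ∈ chu, v' ≠ v
        · -- case (i)
          obtain ⟨v', hv'chu, hv'v⟩ := hcase1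
          have hunotchu : u ∉ chu := by
            intro h
            have := (Finset.mem_filter.1 h).2.2
            have hdp := T.dep_par u hus hur
            rw [this] at hdp
            omega
          refine step u u (insert u chu) ?_ (Finset.mem_insert_self _ _) hus ?_ ?_ ?_ ?_
          · exact Finset.insert_subset hus (Finset.filter_subset _ _)
          · intro x hx
            rcases Finset.mem_insert.1 hx with h | h
            · exact Or.inl h
            · refine Or.inr ?_
              have h2 := (Finset.mem_filter.1 h).2.2
              have := T.par_adj x (Finset.mem_filter.1 h).1 (Finset.mem_filter.1 h).2.1
              rw [h2] at this
              exact this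
          · have hpair : ({v, v'} : Finset V) ⊆ chu := by
              intro z hz
              rcases Finset.mem_insert.1 hz with h | h
              · rw [h]; exact hvchu
              · rw [Finset.mem_singleton.1 h]; exact hv'chu
            have h2 : 2 ≤ chu.card := by
              have := Finset.card_le_card hpair
              rw [Finset.card_pair (Ne.symm hv'v)] at this
              exact this
            rw [Finset.card_insert_of_notMem hunotchu]
            omega
          · intro x hx
            rcases Finset.mem_insert.1 hx with h | h
            · exact ⟨0, by rw [h]; rfl⟩
            · exact hchu_sub x h
          · intro x hxs hxD hex
            exfalso
            obtain ⟨k2, hk2, hk2le, hk2dep⟩ := hnorm x hxs u hus hex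
            have hxmax := hvmax x hxs
            have hk21 : k2 ≤ 1 := by omega
            rcases Nat.lt_or_ge k2 1 with h0 | h1
            · have : k2 = 0 := by omega
              rw [this] at hk2
              simp only [Function.iterate_zero, id] at hk2
              exact hxD (hk2 ▸ Finset.mem_insert_self u chu)
            · have : k2 = 1 := by omega
              rw [this] at hk2
              simp only [Function.iterate_one] at hk2
              have hxx0 : x ≠ x₀ := by
                intro h; rw [h, T.dep_root] at hk2dep; omega
              exact hxD (Finset.mem_insert_of_mem
                (Finset.mem_filter.2 ⟨hxs, hxx0, hk2⟩))
        · push_neg at hcase1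
          have hwnotchw : w ∉ chw := by
            intro h
            have hdp := T.dep_par w hws (Finset.mem_filter.1 h).2.1
            rw [(Finset.mem_filter.1 h).2.2] at hdp
            omega
          by_cases hcase2 : ∃ u' ∈ chw, u' ≠ u
          · -- case (ii)
            obtain ⟨u', hu'chw, hu'u⟩ := hcase2
            refine step w w (insert w chw) ?_ (Finset.mem_insert_self _ _) hws ?_ ?_ ?_ ?_
            · exact Finset.insert_subset hws (Finset.filter_subset _ _)
            · intro x hx
              rcases Finset.mem_insert.1 hx with h | h
              · exact Or.inl h
              · refine Or.inr ?_
                have h2 := (Finset.mem_filter.1 h).2.2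
                have := T.par_adj x (Finset.mem_filter.1 h).1 (Finset.mem_filter.1 h).2.1
                rw [h2] at this
                exact this
            · have hpair : ({u, u'} : Finset V) ⊆ chw := by
                intro z hz
                rcases Finset.mem_insert.1 hz with h | h
                · rw [h]; exact huchw
                · rw [Finset.mem_singleton.1 h]; exact hu'chw
              have h2 : 2 ≤ chw.card := by
                have := Finset.card_le_card hpair
                rw [Finset.card_pair (Ne.symm hu'u)] at this
                exact this
              rw [Finset.card_insert_of_notMem hwnotchw]
              omega
            · intro x hx
              rcases Finset.mem_insert.1 hx with h | h
              · exact ⟨0, by rw [h]; rfl⟩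
              · exact hchw_sub x h
            · intro x hxs hxD hex
              have hxw : ¬(x = w) := fun h => hxD (h ▸ Finset.mem_insert_self w chw)
              have hxchw : x ∉ chw := fun h => hxD (Finset.mem_insert_of_mem h)
              obtain ⟨_, hxx0, hpchw, hp2, hleaf⟩ :=
                hgrand x hxs (hnorm x hxs w hws hex) hxw hxchw
              exact ⟨hleaf, Finset.mem_insert_of_mem hpchw, hp2⟩
          · -- case (iii)
            push_neg at hcase2
            have hwu : w ≠ u := by
              intro h
              have : T.dep w = T.dep u := by rw [h]
              omega
            have huv : u ≠ v := by
              intro h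
              have : T.dep u = T.dep v := by rw [h]
              omega
            have hwv : w ≠ v := by
              intro h
              have : T.dep w = T.dep v := by rw [h]
              omega
            have hcard3 : ({w, u, v} : Finset V).card = 3 := by
              rw [Finset.card_insert_of_notMem, Finset.card_pair huv]
              simp only [Finset.mem_insert, Finset.mem_singleton]
              push_neg
              exact ⟨hwu, hwv⟩
            refine step u w {w, u, v} ?_ (Finset.mem_insert_self _ _) hus ?_ ?_ ?_ ?_
            · intro x hx
              rcases Finset.mem_insert.1 hx with h | h
              · rw [h]; exact hws
              · rcases Finset.mem_insert.1 h with h2 | h2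
                · rw [h2]; exact hus
                · rw [Finset.mem_singleton.1 h2]; exact hvs
            · intro x hx
              rcases Finset.mem_insert.1 hx with h | h
              · refine Or.inr ?_
                rw [h]
                exact (T.par_adj u hus hur).symm
              · rcases Finset.mem_insert.1 h with h2 | h2
                · exact Or.inl h2
                · refine Or.inr ?_
                  rw [Finset.mem_singleton.1 h2]
                  exact T.par_adj v hvs hvr
            · rw [hcard3]
            · intro x hx
              rcases Finset.mem_insert.1 hx with h | h
              · exact ⟨0, by rw [h]; rfl⟩
              · rcases Finset.mem_insert.1 h with h2 | h2
                · exact ⟨1, by rw [h2]; simp [hw]⟩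
                · refine ⟨2, ?_⟩
                  rw [Finset.mem_singleton.1 h2]
                  have h3 : T.par^[2] v = T.par (T.par v) := by
                    rw [Function.iterate_succ_apply', Function.iterate_one]
                  rw [h3]
            · intro x hxs hxD hex
              exfalso
              have hxw : ¬(x = w) := fun h =>
                hxD (h ▸ Finset.mem_insert_self w {u, v})
              have hxchw : x ∉ chw := by
                intro h
                exact hxD (by rw [hcase2 x h]; simp)
              obtain ⟨hdx, hxx0, hpchw, hp2, hleaf⟩ :=
                hgrand x hxs (hnorm x hxs w hws hex) hxw hxchw
              have hpu : T.par x = u := hcase2 (T.par x) hpchw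
              have hxchu : x ∈ chu := Finset.mem_filter.2 ⟨hxs, hxx0, hpu⟩
              exact hxD (by rw [hcase1 x hxchu]; simp)
    · -- disconnected case
      set C := s.filter (fun z => SReach G s x₀ z) with hC
      have hCs : C ⊆ s := Finset.filter_subset _ _
      have hx₀C : x₀ ∈ C := Finset.mem_filter.2 ⟨hx₀, Relation.ReflTransGen.refl⟩
      push_neg at hconn
      obtain ⟨y, hys, hyn⟩ := hconn
      have hyC : y ∉ C := fun h => hyn (Finset.mem_filter.1 h).2
      have hCss : C ⊂ s := (Finset.ssubset_iff_of_subset hCs).2 ⟨y, hys, hyC⟩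
      have hC2ss : s \ C ⊂ s := (Finset.ssubset_iff_of_subset Finset.sdiff_subset).2
        ⟨x₀, hx₀, fun h => (Finset.mem_sdiff.1 h).2 hx₀C⟩
      obtain ⟨S₁, hS₁sub, hS₁card, hS₁cov⟩ := ih C hCss
      obtain ⟨S₂, hS₂sub, hS₂card, hS₂cov⟩ := ih (s \ C) hC2ss
      have hcross : ∀ a ∈ C, ∀ b ∈ s, G.Adj a b → b ∈ C := by
        intro a ha b hb hab
        exact Finset.mem_filter.2 ⟨hb, (Finset.mem_filter.1 ha).2.tail ⟨hb, hab⟩⟩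
      refine ⟨S₁ ∪ S₂, ?_, ?_, ?_⟩
      · exact Finset.union_subset (hS₁sub.trans hCs) (hS₂sub.trans Finset.sdiff_subset)
      · have hdisj : Disjoint S₁ S₂ := by
          rw [Finset.disjoint_left]
          intro a ha1 ha2
          exact (Finset.mem_sdiff.1 (hS₂sub ha2)).2 (hS₁sub ha1)
        have hcards : (s \ C).card + C.card = s.card :=
          Finset.card_sdiff_add_card_eq_card hCs
        have hIE : (IEset G C).card + (IEset G (s \ C)).card ≤ (IEset G s).card := by
          have hsub1 : IEset G C ⊆ IEset G s := by
            intro a ha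
            obtain ⟨haC, b, hiso⟩ := Finset.mem_filter.1 ha
            refine Finset.mem_filter.2 ⟨hCs haC, b, hCs haC, hCs hiso.2.1, hiso.2.2.1, ?_⟩
            intro c hc hca hcb
            by_cases hcC : c ∈ C
            · exact hiso.2.2.2 c hcC hca hcb
            · constructor
              · intro hadj
                exact hcC (hcross a haC c hc hadj.symm)
              · intro hadj
                exact hcC (hcross b hiso.2.1 c hc hadj.symm)
          have hsub2 : IEset G (s \ C) ⊆ IEset G s := by
            intro a ha
            obtain ⟨haC, b, hiso⟩ := Finset.mem_filter.1 ha
            have has : a ∈ s := (Finset.mem_sdiff.1 haC).1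
            have hbs : b ∈ s := (Finset.mem_sdiff.1 hiso.2.1).1
            refine Finset.mem_filter.2 ⟨has, b, has, hbs, hiso.2.2.1, ?_⟩
            intro c hc hca hcb
            by_cases hcC : c ∈ C
            · constructor
              · intro hadj
                exact (Finset.mem_sdiff.1 haC).2 (hcross c hcC a has hadj)
              · intro hadj
                exact (Finset.mem_sdiff.1 hiso.2.1).2 (hcross c hcC b hbs hadj)
            · exact hiso.2.2.2 c (Finset.mem_sdiff.2 ⟨hc, hcC⟩) hca hcb
          have hdisj2 : Disjoint (IEset G C) (IEset G (s \ C)) := by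
            rw [Finset.disjoint_left]
            intro a ha1 ha2
            exact (Finset.mem_sdiff.1 (Finset.mem_filter.1 ha2).1).2
              (Finset.mem_filter.1 ha1).1
          calc (IEset G C).card + (IEset G (s \ C)).card
              = (IEset G C ∪ IEset G (s \ C)).card :=
                (Finset.card_union_of_disjoint hdisj2).symm
            _ ≤ (IEset G s).card := Finset.card_le_card (Finset.union_subset hsub1 hsub2)
        rw [Finset.card_union_of_disjoint hdisj]
        omega
      · intro a ha b hb hab
        by_cases haC : a ∈ C
        · have hbC : b ∈ C := hcross a haC b hb hab
          obtain ⟨z, hz, hzz⟩ := hS₁cov a haC b hbC hab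
          exact ⟨z, Finset.mem_union_left _ hz, hzz⟩
        · have hbC : b ∉ C := fun hbC => haC (hcross b hbC a ha hab.symm)
          obtain ⟨z, hz, hzz⟩ := hS₂cov a (Finset.mem_sdiff.2 ⟨ha, haC⟩)
            b (Finset.mem_sdiff.2 ⟨hb, hbC⟩) hab
          exact ⟨z, Finset.mem_union_right _ hz, hzz⟩

end LocalDimAux


theorem dimL_le_two_fifths (G : SimpleGraph V) (hc : G.Connected)
    (hω : G.cliqueNum = 2) (hn : 3 ≤ Fintype.card V) :
    (dimL G : ℚ) ≤ (2 / 5) * (Fintype.card V : ℚ) := by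
  classical
  obtain ⟨S, hSsub, hScard, hScov⟩ := LocalDimAux.main_cov G (Finset.univ : Finset V)
  have hIE : LocalDimAux.IEset G (Finset.univ : Finset V) = ∅ := by
    rw [Finset.eq_empty_iff_forall_notMem]
    intro a ha
    obtain ⟨-, b, hiso⟩ := Finset.mem_filter.1 ha
    have hadj : G.Adj a b := hiso.2.2.1
    obtain ⟨c, hcb, hca⟩ : ∃ c, c ≠ b ∧ c ≠ a := by
      have h1 : (Finset.univ.erase a).card = Fintype.card V - 1 := by
        rw [Finset.card_erase_of_mem (Finset.mem_univ a), Finset.card_univ]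
      have h2 : 1 < (Finset.univ.erase a).card := by omega
      obtain ⟨c, hc1, hc2⟩ := Finset.exists_mem_ne h2 b
      exact ⟨c, hc2, (Finset.mem_erase.1 hc1).1⟩
    have hclosed : ∀ x, Relation.ReflTransGen G.Adj a x → x = a ∨ x = b := by
      intro x hx
      induction hx with
      | refl => exact Or.inl rfl
      | @tail p q hp hpq ihp =>
        by_cases hqa : q = a
        · exact Or.inl hqa
        · by_cases hqb : q = b
          · exact Or.inr hqb
          · exfalso
            have hni := hiso.2.2.2 q (Finset.mem_univ q) hqa hqb
            rcases ihp with h | h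
            · exact hni.1 (h ▸ hpq).symm
            · exact hni.2 (h ▸ hpq).symm
    have hreach : Relation.ReflTransGen G.Adj a c :=
      (SimpleGraph.reachable_iff_reflTransGen (G := G) a c).1 (hc.preconnected a c)
    rcases hclosed c hreach with h | h
    · exact hca h
    · exact hcb h
  have hcard0 : (LocalDimAux.IEset G (Finset.univ : Finset V)).card = 0 := by
    rw [hIE]; exact Finset.card_empty
  rw [Finset.card_univ, hcard0] at hScard
  have htri : ∀ x y z' : V, G.Adj x y → G.Adj y z' → G.Adj x z' → False := by
    intro x y z' h1 h2 h3
    have hclique : G.IsNClique 3 {x, y, z'} := by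
      constructor
      · intro p hp q hq hpq
        simp only [Finset.coe_insert, Set.mem_insert_iff, Finset.coe_singleton,
          Set.mem_singleton_iff] at hp hq
        rcases hp with rfl | rfl | rfl <;> rcases hq with rfl | rfl | rfl <;>
          first
            | exact absurd rfl hpq
            | exact h1
            | exact h1.symm
            | exact h2
            | exact h2.symm
            | exact h3
            | exact h3.symm
      · rw [Finset.card_insert_of_notMem, Finset.card_insert_of_notMem,
          Finset.card_singleton]
        · simp only [Finset.mem_singleton]
          exact G.ne_of_adj h2
        · simp only [Finset.mem_insert, Finset.mem_singleton]
          push_neg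
          exact ⟨G.ne_of_adj h1, G.ne_of_adj h3⟩
    have hle : ({x, y, z'} : Finset V).card ≤ G.cliqueNum :=
      SimpleGraph.IsClique.card_le_cliqueNum (tc := hclique.isClique)
    rw [hclique.card_eq, hω] at hle
    omega
  have hres : IsLocalResolving G S := by
    intro u v huv huS hvS
    obtain ⟨z, hzS, hz⟩ := hScov u (Finset.mem_univ u) v (Finset.mem_univ v) huv
    have hzu : z ≠ u := fun h => huS (h ▸ hzS)
    have hzv : z ≠ v := fun h => hvS (h ▸ hzS)
    rcases hz with h | h | h | h
    · exact absurd h hzu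
    · exact absurd h hzv
    · refine ⟨z, hzS, ?_⟩
      have hd1 : G.dist u z = 1 := SimpleGraph.dist_eq_one_iff_adj.2 h.symm
      have hnd1 : G.dist v z ≠ 1 := by
        intro hd
        exact htri z u v h huv (SimpleGraph.dist_eq_one_iff_adj.1 hd).symm
      rw [hd1]
      exact fun hdd => hnd1 hdd.symm
    · refine ⟨z, hzS, ?_⟩
      have hd1 : G.dist v z = 1 := SimpleGraph.dist_eq_one_iff_adj.2 h.symm
      have hnd1 : G.dist u z ≠ 1 := by
        intro hd
        exact htri z v u h huv.symm (SimpleGraph.dist_eq_one_iff_adj.1 hd).symm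
      rw [hd1]
      exact hnd1
  have hdim : dimL G ≤ S.card := Nat.sInf_le ⟨S, rfl, hres⟩
  have hq1 : (dimL G : ℚ) ≤ (S.card : ℚ) := by exact_mod_cast hdim
  have hq2 : (10 : ℚ) * (S.card : ℚ) ≤ 4 * (Fintype.card V : ℚ) := by
    exact_mod_cast hScard
  linarith
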